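/- arXiv:1909.06406 — 5 statements merged into one kernel-verified Lean document; each statement's English description precedes it below -/
import Mathlib

section
/- For y ∈ R, α ≥ 0, γ ∈ (0,∞)^n, the measure μ on R^n with density (y - γ·x)_+^α with respect to Lebesgue measure satisfies T_μ(x) = (y - γ·x)_+^{α+n} / ∏_{i=1}^n ((α+i)γ_i) for all x ∈ R^n, where T_μ(x) := μ(∏_{i=1}^n (x_i,∞)) and u_+ := max(0,u). -/
open MeasureTheory Finset Set
open scoped ENNReal

lemma aux1 (β : ℝ) (hβ : 0 ≤ β) (b a : ℝ) :
    ∫⁻ t in Ioi a, ENNReal.ofReal (if 0 < b - t then (b - t) ^ β else 0)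
      = ENNReal.ofReal ((max 0 (b - a)) ^ (β + 1) / (β + 1)) := by
  have hβ1 : (0:ℝ) < β + 1 := by linarith
  rcases le_or_gt b a with hba | hab
  · rw [setLIntegral_congr_fun measurableSet_Ioi
      (fun t ht => ?_), lintegral_zero,
      max_eq_left (by linarith), Real.zero_rpow hβ1.ne', zero_div, ENNReal.ofReal_zero]
    have : b - t < 0 := by simp at ht; linarith
    simp [not_lt.mpr this.le]
  · rw [← Set.Ioo_union_Ici_eq_Ioi hab,
      lintegral_union measurableSet_Ici
        ((Set.Iio_disjoint_Ici le_rfl).mono_left Set.Ioo_subset_Iio_self)]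
    have h2 : ∫⁻ t in Ici b, ENNReal.ofReal (if 0 < b - t then (b - t) ^ β else 0) = 0 := by
      rw [setLIntegral_congr_fun measurableSet_Ici
        (fun t ht => ?_), lintegral_zero]
      have : ¬ 0 < b - t := by simp at ht ⊢; linarith
      simp [this]
    have hint : IntegrableOn (fun t => (b - t) ^ β) (Ioo a b) volume := by
      have h0 := ((intervalIntegral.intervalIntegrable_rpow (r := β) (a := 0) (b := b - a)
        (Or.inl hβ)).comp_sub_left b).symm
      rw [sub_zero, sub_sub_cancel] at h0
      rw [← integrableOn_Ioc_iff_integrableOn_Ioo]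
      exact (intervalIntegrable_iff_integrableOn_Ioc_of_le hab.le).mp h0
    have heq : ∀ t ∈ Ioo a b, ENNReal.ofReal (if 0 < b - t then (b - t) ^ β else 0)
        = ENNReal.ofReal ((b - t) ^ β) := by
      intro t ht
      have : 0 < b - t := by simp at ht; linarith [ht.2]
      simp [this]
    have h1 : ∫⁻ t in Ioo a b, ENNReal.ofReal (if 0 < b - t then (b - t) ^ β else 0)
        = ENNReal.ofReal ((b - a) ^ (β + 1) / (β + 1)) := by
      rw [setLIntegral_congr_fun measurableSet_Ioo heq,
        ← ofReal_integral_eq_lintegral_ofReal hint]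
      · congr 1
        rw [← integral_Ioc_eq_integral_Ioo, ← intervalIntegral.integral_of_le hab.le,
          intervalIntegral.integral_comp_sub_left (fun u => u ^ β) b, sub_self,
          integral_rpow (Or.inl (by linarith)), Real.zero_rpow hβ1.ne', sub_zero]
      · filter_upwards [ae_restrict_mem measurableSet_Ioo] with t ht
        exact Real.rpow_nonneg (by simp at ht; linarith [ht.2]) β
    rw [h1, h2, add_zero, max_eq_right (by linarith)]

lemma aux2 (β : ℝ) (hβ : 0 ≤ β) (g : ℝ) (hg : 0 < g) (c a : ℝ) :
    ∫⁻ t in Ioi a, ENNReal.ofReal (if 0 < c - g * t then (c - g * t) ^ β else 0)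
      = ENNReal.ofReal ((max 0 (c - g * a)) ^ (β + 1) / ((β + 1) * g)) := by
  have hβ1 : (0:ℝ) < β + 1 := by linarith
  have key : ∀ t : ℝ, ENNReal.ofReal (if 0 < c - g * t then (c - g * t) ^ β else 0)
      = ENNReal.ofReal (g ^ β) * ENNReal.ofReal (if 0 < c / g - t then (c / g - t) ^ β else 0) := by
    intro t
    have hiff : (0 < c - g * t) ↔ (0 < c / g - t) := by
      rw [sub_pos, sub_pos, lt_div_iff₀ hg, mul_comm]
    by_cases h : 0 < c - g * t
    · have h' : 0 < c / g - t := hiff.mp h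
      rw [if_pos h, if_pos h', ← ENNReal.ofReal_mul (Real.rpow_nonneg hg.le β),
        ← Real.mul_rpow hg.le h'.le]
      congr 2
      field_simp
    · rw [if_neg h, if_neg (fun h' => h (hiff.mpr h'))]
      simp
  simp_rw [key]
  rw [lintegral_const_mul _ (by
      apply Measurable.ennreal_ofReal
      exact Measurable.ite (measurableSet_lt measurable_const (by fun_prop))
        (by fun_prop) measurable_const),
    aux1 β hβ (c / g) a]
  rw [← ENNReal.ofReal_mul (Real.rpow_nonneg hg.le β)]
  congr 1
  have hmax : max 0 (c / g - a) = (max 0 (c - g * a)) / g := by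
    rcases le_or_gt c (g * a) with h | h
    · rw [max_eq_left (sub_nonpos.mpr h),
        max_eq_left (sub_nonpos.mpr ((div_le_iff₀ hg).mpr (by linarith))), zero_div]
    · rw [max_eq_right (sub_nonneg.mpr ((le_div_iff₀ hg).mpr (by linarith))),
        max_eq_right (by linarith)]
      field_simp
  have hgβ : (0:ℝ) < g ^ β := Real.rpow_pos_of_pos hg β
  rw [hmax, Real.div_rpow (le_max_left _ _) hg.le, Real.rpow_add hg, Real.rpow_one]
  field_simp

lemma measdens {δ : Type*} [MeasurableSpace δ] {u : δ → ℝ} (hu : Measurable u) (α : ℝ) :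
    Measurable fun z => ENNReal.ofReal (if 0 < u z then (u z) ^ α else 0) := by
  apply Measurable.ennreal_ofReal
  exact Measurable.ite (measurableSet_lt measurable_const hu)
    (by fun_prop) measurable_const

lemma measS {n : ℕ} (x : Fin n → ℝ) : MeasurableSet {z : Fin n → ℝ | ∀ i, x i < z i} := by
  have : {z : Fin n → ℝ | ∀ i, x i < z i} = Set.pi univ (fun i => Ioi (x i)) := by
    ext z; simp [Set.mem_pi]
  rw [this]
  exact MeasurableSet.univ_pi (fun i => measurableSet_Ioi)

lemma tail_aux (n : ℕ) (hn : 1 ≤ n) : ∀ (y α : ℝ), 0 ≤ α → ∀ (γ : Fin n → ℝ), (∀ i, 0 < γ i) →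
    ∀ x : Fin n → ℝ,
    ∫⁻ z in {z : Fin n → ℝ | ∀ i, x i < z i},
        ENNReal.ofReal (if 0 < y - ∑ i, γ i * z i then (y - ∑ i, γ i * z i) ^ α else 0)
      = ENNReal.ofReal ((max 0 (y - ∑ i, γ i * x i)) ^ (α + n)
          / ∏ i : Fin n, (α + ((i : ℕ) + 1)) * γ i) := by
  induction n, hn using Nat.le_induction with
  | base =>
    intro y α hα γ hγ x
    have MP := volume_preserving_funUnique (Fin 1) ℝ
    set dens : (Fin 1 → ℝ) → ℝ≥0∞ := fun z =>
      ENNReal.ofReal (if 0 < y - ∑ i, γ i * z i then (y - ∑ i, γ i * z i) ^ α else 0) with hdens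
    set G : ℝ → ℝ≥0∞ :=
      (Ioi (x 0)).indicator
        (fun t => ENNReal.ofReal (if 0 < y - γ 0 * t then (y - γ 0 * t) ^ α else 0)) with hGdef
    have hG : Measurable G :=
      (measdens (by fun_prop) α).indicator measurableSet_Ioi
    have hptw : ∀ z : Fin 1 → ℝ,
        ({z : Fin 1 → ℝ | ∀ i, x i < z i}).indicator dens z
          = G ((MeasurableEquiv.funUnique (Fin 1) ℝ) z) := by
      intro z
      have hz : (MeasurableEquiv.funUnique (Fin 1) ℝ) z = z 0 := rfl
      have hmem : z ∈ {z : Fin 1 → ℝ | ∀ i, x i < z i} ↔ x 0 < z 0 := by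
        constructor
        · exact fun h => h 0
        · intro h i; rwa [Subsingleton.elim i 0]
      by_cases h : x 0 < z 0
      · rw [Set.indicator_of_mem (hmem.mpr h), hz, hGdef]
        simp only [Set.indicator_of_mem (show z 0 ∈ Ioi (x 0) from h), hdens, Fin.sum_univ_one]
      · rw [Set.indicator_of_notMem (fun hm => h (hmem.mp hm)), hz, hGdef,
          Set.indicator_of_notMem (show z 0 ∉ Ioi (x 0) from h)]
    rw [← lintegral_indicator (measS x) dens, lintegral_congr hptw]
    erw [MP.lintegral_comp hG]
    rw [hGdef]
    rw [lintegral_indicator measurableSet_Ioi]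
    rw [aux2 α hα (γ 0) (hγ 0) y (x 0)]
    congr 1
    simp [Fin.sum_univ_one, Fin.prod_univ_one]
  | succ m hm IH =>
    intro y α hα γ hγ x
    have MP := volume_preserving_piFinSuccAbove (fun _ : Fin (m+1) => ℝ) 0
    set e := MeasurableEquiv.piFinSuccAbove (fun _ : Fin (m+1) => ℝ) 0 with he
    set S := {z : Fin (m+1) → ℝ | ∀ i, x i < z i} with hS
    set dens : (Fin (m+1) → ℝ) → ℝ≥0∞ := fun z =>
      ENNReal.ofReal (if 0 < y - ∑ i, γ i * z i then (y - ∑ i, γ i * z i) ^ α else 0) with hdens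
    have hdensm : Measurable dens := measdens (by fun_prop) α
    have hFm : Measurable (S.indicator dens) := hdensm.indicator (measS x)
    have hGm : Measurable (fun p : ℝ × (Fin m → ℝ) => S.indicator dens (e.symm p)) :=
      hFm.comp e.symm.measurable
    -- components of e.symm (t, w)
    have hcomp0 : ∀ (t : ℝ) (w : Fin m → ℝ), e.symm (t, w) 0 = t := by
      intro t w; simp [he, MeasurableEquiv.piFinSuccAbove]
    have hcompS : ∀ (t : ℝ) (w : Fin m → ℝ) (j : Fin m), e.symm (t, w) j.succ = w j := by
      intro t w j; simp [he, MeasurableEquiv.piFinSuccAbove]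
    have hstep1 : ∫⁻ z in S, dens z
        = ∫⁻ t, ∫⁻ w, S.indicator dens (e.symm (t, w)) := by
      rw [← lintegral_indicator (measS x) dens]
      have : ∀ z, S.indicator dens z = S.indicator dens (e.symm (e z)) := by
        intro z; rw [e.symm_apply_apply]
      rw [lintegral_congr this, MP.lintegral_comp hGm, Measure.volume_eq_prod]
      rw [← lintegral_prod _ hGm.aemeasurable]
    rw [hstep1]
    -- inner integral
    have hinner : ∀ t : ℝ, ∫⁻ w, S.indicator dens (e.symm (t, w))
        = (Ioi (x 0)).indicator (fun t => ENNReal.ofReal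
            ((max 0 ((y - γ 0 * t) - ∑ j : Fin m, γ j.succ * x j.succ)) ^ (α + m)
              / ∏ j : Fin m, (α + ((j : ℕ) + 1)) * γ j.succ)) t := by
      intro t
      by_cases ht : x 0 < t
      · rw [Set.indicator_of_mem (show t ∈ Ioi (x 0) from ht)]
        have hmem : ∀ w : Fin m → ℝ,
            S.indicator dens (e.symm (t, w))
              = ({w : Fin m → ℝ | ∀ j, x j.succ < w j}).indicator
                  (fun w => ENNReal.ofReal
                    (if 0 < (y - γ 0 * t) - ∑ j : Fin m, γ j.succ * w j
                     then ((y - γ 0 * t) - ∑ j : Fin m, γ j.succ * w j) ^ α else 0)) w := by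
          intro w
          have hsum : ∑ i : Fin (m+1), γ i * (e.symm (t, w)) i
              = γ 0 * t + ∑ j : Fin m, γ j.succ * w j := by
            rw [Fin.sum_univ_succ, hcomp0]
            simp only [hcompS]
          have hmemiff : e.symm (t, w) ∈ S ↔ (∀ j : Fin m, x j.succ < w j) := by
            rw [hS, Set.mem_setOf_eq, Fin.forall_fin_succ, hcomp0]
            simp only [hcompS]
            exact ⟨fun h => h.2, fun h => ⟨ht, h⟩⟩
          by_cases hw : ∀ j : Fin m, x j.succ < w j
          · rw [Set.indicator_of_mem (hmemiff.mpr hw),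
              Set.indicator_of_mem (show w ∈ {w : Fin m → ℝ | ∀ j, x j.succ < w j} from hw), hdens]
            simp only [hsum, sub_sub]
          · rw [Set.indicator_of_notMem (fun hm' => hw (hmemiff.mp hm')),
              Set.indicator_of_notMem (show w ∉ {w : Fin m → ℝ | ∀ j, x j.succ < w j} from hw)]
        rw [lintegral_congr hmem, lintegral_indicator (measS (fun j => x j.succ))]
        exact IH (y - γ 0 * t) α hα (fun j => γ j.succ) (fun j => hγ j.succ) (fun j => x j.succ)
      · rw [Set.indicator_of_notMem (show t ∉ Ioi (x 0) from ht)]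
        have : ∀ w : Fin m → ℝ, S.indicator dens (e.symm (t, w)) = 0 := by
          intro w
          apply Set.indicator_of_notMem
          intro hm'
          exact ht (by simpa [hcomp0] using hm' 0)
        rw [lintegral_congr this, lintegral_zero]
    rw [lintegral_congr hinner, lintegral_indicator measurableSet_Ioi]
    -- now outer integral via aux2 with β = α + m
    have hβ : (0:ℝ) ≤ α + m := by positivity
    have hP : (0:ℝ) < ∏ j : Fin m, (α + ((j : ℕ) + 1)) := by
      apply Finset.prod_pos; intro j _; positivity
    have hQ : (0:ℝ) < ∏ j : Fin m, γ j.succ := Finset.prod_pos (fun j _ => hγ j.succ)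
    set P := ∏ j : Fin m, (α + ((j : ℕ) + 1)) with hPdef
    set Q := ∏ j : Fin m, γ j.succ with hQdef
    have hD : ∏ j : Fin m, (α + ((j : ℕ) + 1)) * γ j.succ = P * Q := by
      rw [hPdef, hQdef, ← Finset.prod_mul_distrib]
    have hrw : ∀ t : ℝ, ENNReal.ofReal
          ((max 0 ((y - γ 0 * t) - ∑ j : Fin m, γ j.succ * x j.succ)) ^ (α + m)
            / ∏ j : Fin m, (α + ((j : ℕ) + 1)) * γ j.succ)
        = ENNReal.ofReal (1 / (P * Q)) * ENNReal.ofReal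
            (if 0 < (y - ∑ j : Fin m, γ j.succ * x j.succ) - γ 0 * t
             then ((y - ∑ j : Fin m, γ j.succ * x j.succ) - γ 0 * t) ^ (α + m) else 0) := by
      intro t
      rw [hD, ← ENNReal.ofReal_mul (by positivity)]
      congr 1
      have harg : (y - γ 0 * t) - ∑ j : Fin m, γ j.succ * x j.succ
          = (y - ∑ j : Fin m, γ j.succ * x j.succ) - γ 0 * t := by ring
      rw [harg]
      set u := (y - ∑ j : Fin m, γ j.succ * x j.succ) - γ 0 * t with hu
      by_cases h : 0 < u
      · rw [if_pos h, max_eq_right h.le]; field_simp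
      · rw [if_neg h, max_eq_left (not_lt.mp h), Real.zero_rpow (by positivity), mul_zero, zero_div]
    rw [lintegral_congr hrw]
    rw [lintegral_const_mul _
      (measdens (u := fun t : ℝ => (y - ∑ j : Fin m, γ j.succ * x j.succ) - γ 0 * t)
        (by fun_prop) (α + m))]
    rw [aux2 (α + m) hβ (γ 0) (hγ 0) (y - ∑ j : Fin m, γ j.succ * x j.succ) (x 0)]
    rw [← ENNReal.ofReal_mul (by positivity)]
    congr 1
    -- final algebra
    have hsumx : y - ∑ i : Fin (m+1), γ i * x i
        = (y - ∑ j : Fin m, γ j.succ * x j.succ) - γ 0 * x 0 := by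
      rw [Fin.sum_univ_succ]; ring
    have hprod : ∏ i : Fin (m+1), (α + ((i : ℕ) + 1)) * γ i = (P * (α + (m + 1))) * (γ 0 * Q) := by
      rw [Finset.prod_mul_distrib]
      congr 1
      · rw [Fin.prod_univ_castSucc]
        simp [hPdef, Fin.last]
      · rw [Fin.prod_univ_succ, hQdef]
    rw [hsumx, hprod]
    set M := max 0 ((y - ∑ j : Fin m, γ j.succ * x j.succ) - γ 0 * x 0) with hM
    have hcast : α + ((m : ℕ) + 1 : ℕ) = α + m + 1 := by push_cast; ring
    rw [hcast]
    field_simp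
    ring

/-- For `y ∈ ℝ`, `α ≥ 0`, `γ ∈ (0,∞)ⁿ`, the measure on `ℝⁿ` with density
`(y - γ·x)₊^α` (with the convention `0^0 = 0`) has tail function
`T_μ(x) = (y - γ·x)₊^{α+n} / ∏ᵢ ((α+i) γᵢ)`. -/
theorem tail_of_withDensity_pos_part_pow
    (n : ℕ) (hn : 1 ≤ n) (y : ℝ) (α : ℝ) (hα : 0 ≤ α) (γ : Fin n → ℝ) (hγ : ∀ i, 0 < γ i)
    (μ : Measure (Fin n → ℝ))
    (hμ : μ = (volume : Measure (Fin n → ℝ)).withDensity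
        (fun x => ENNReal.ofReal
          (if 0 < y - ∑ i, γ i * x i then (y - ∑ i, γ i * x i) ^ α else 0))) :
    ∀ x : Fin n → ℝ,
      μ {z | ∀ i, x i < z i}
        = ENNReal.ofReal
            ((max 0 (y - ∑ i, γ i * x i)) ^ (α + n)
              / ∏ i : Fin n, (α + ((i : ℕ) + 1)) * γ i) := by
  intro x
  rw [hμ, withDensity_apply _ (measS x)]
  exact tail_aux n hn y α hα γ hγ x
end

section
/- Let G_1,...,G_n have joint density n! on {z_i > 0, Σ z_i < 1}. For j ∈ {0,...,n}, x ∈ (0,1), y ∈ (0,1], the probability p_{n,j}(x,y) := P(G_i ≤ x for all i ≤ j, G_i > x for all j < i ≤ n, Σ_{i=1}^n G_i < y) equals Σ_{r=0}^j (-1)^{j-r} C(j,r) (y - (n-r)x)_+^n. -/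
open MeasureTheory Finset Set
open scoped ENNReal

lemma measurableSet_simplex' (n : ℕ) (t : ℝ) :
    MeasurableSet {z : Fin n → ℝ | (∀ i, 0 < z i) ∧ ∑ i, z i < t} := by
  have h1 : MeasurableSet {z : Fin n → ℝ | ∀ i, 0 < z i} := by
    have : {z : Fin n → ℝ | ∀ i, 0 < z i} = ⋂ i, {z | 0 < z i} := by
      ext z; simp
    rw [this]
    exact MeasurableSet.iInter fun i => measurableSet_lt measurable_const (measurable_pi_apply i)
  have h2 : MeasurableSet {z : Fin n → ℝ | ∑ i, z i < t} :=
    measurableSet_lt (Finset.univ.measurable_sum fun i _ => measurable_pi_apply i)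
      measurable_const
  exact h1.inter h2

lemma simplex_vol (n : ℕ) (t : ℝ) :
    volume {z : Fin n → ℝ | (∀ i, 0 < z i) ∧ ∑ i, z i < t}
      = if 0 < t then ENNReal.ofReal (t ^ n / n.factorial) else 0 := by
  induction n generalizing t with
  | zero =>
    by_cases ht : 0 < t
    · have : {z : Fin 0 → ℝ | (∀ i, 0 < z i) ∧ ∑ i, z i < t} = Set.univ := by
        ext z; simp [ht]
      rw [this]; simp only [ht, if_true]
      rw [MeasureTheory.volume_pi, Measure.pi_univ]; simp
    · have : {z : Fin 0 → ℝ | (∀ i, 0 < z i) ∧ ∑ i, z i < t} = ∅ := by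
        ext z; simp [ht]
      rw [this]; simp [ht]
  | succ n ih =>
    set A : Set (ℝ × (Fin n → ℝ)) :=
      {p | (0 < p.1 ∧ ∀ i, 0 < p.2 i) ∧ p.1 + ∑ i, p.2 i < t} with hA
    have hAm : MeasurableSet A := by
      have h1 : MeasurableSet {p : ℝ × (Fin n → ℝ) | 0 < p.1} :=
        measurableSet_lt measurable_const measurable_fst
      have h2 : MeasurableSet {p : ℝ × (Fin n → ℝ) | ∀ i, 0 < p.2 i} := by
        have : {p : ℝ × (Fin n → ℝ) | ∀ i, 0 < p.2 i} = ⋂ i, {p | 0 < p.2 i} := by ext; simp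
        rw [this]
        exact MeasurableSet.iInter fun i =>
          measurableSet_lt measurable_const (by fun_prop)
      have h3 : MeasurableSet {p : ℝ × (Fin n → ℝ) | p.1 + ∑ i, p.2 i < t} :=
        measurableSet_lt (measurable_fst.add
          ((Finset.univ.measurable_sum fun i _ => measurable_pi_apply i).comp measurable_snd))
          measurable_const
      exact (h1.inter h2).inter h3
    have hmp := MeasureTheory.volume_preserving_piFinSuccAbove (fun _ : Fin (n+1) => ℝ) 0
    have hpre : {z : Fin (n+1) → ℝ | (∀ i, 0 < z i) ∧ ∑ i, z i < t}
        = (MeasurableEquiv.piFinSuccAbove (fun _ : Fin (n+1) => ℝ) 0) ⁻¹' A := by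
      ext z
      simp only [Set.mem_preimage, MeasurableEquiv.piFinSuccAbove_apply, hA, Set.mem_setOf_eq,
        Fin.zero_succAbove, Fin.forall_fin_succ, Fin.sum_univ_succ, Fin.insertNthEquiv]
      constructor
      · rintro ⟨⟨h0, hs⟩, hsum⟩; exact ⟨⟨h0, hs⟩, hsum⟩
      · rintro ⟨⟨h0, hs⟩, hsum⟩; exact ⟨⟨h0, hs⟩, hsum⟩
    rw [hpre, hmp.measure_preimage hAm.nullMeasurableSet]
    rw [Measure.volume_eq_prod, Measure.prod_apply hAm]
    have hslice : ∀ a : ℝ, volume (Prod.mk a ⁻¹' A)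
        = Set.indicator (Set.Ioo 0 t) (fun a => ENNReal.ofReal ((t-a)^n / n.factorial)) a := by
      intro a
      by_cases ha : 0 < a
      · have : Prod.mk a ⁻¹' A = {b : Fin n → ℝ | (∀ i, 0 < b i) ∧ ∑ i, b i < t - a} := by
          ext b
          simp only [Set.mem_preimage, hA, Set.mem_setOf_eq, ha, true_and]
          constructor
          · rintro ⟨h1, h2⟩; exact ⟨h1, by linarith⟩
          · rintro ⟨h1, h2⟩; exact ⟨h1, by linarith⟩
        rw [this, ih]
        by_cases hat : a < t
        · rw [Set.indicator_of_mem (Set.mem_Ioo.mpr ⟨ha, hat⟩)]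
          rw [if_pos (by linarith)]
        · rw [Set.indicator_of_notMem (fun h => hat (Set.mem_Ioo.mp h).2)]
          rw [if_neg (by intro h; exact hat (by linarith))]
      · have : Prod.mk a ⁻¹' A = ∅ := by
          ext b; simp only [Set.mem_preimage, hA, Set.mem_setOf_eq, Set.mem_empty_iff_false,
            iff_false]
          rintro ⟨⟨h1, _⟩, _⟩; exact ha h1
        rw [this, measure_empty, Set.indicator_of_notMem (fun h => ha (Set.mem_Ioo.mp h).1)]
    simp_rw [hslice]
    rw [lintegral_indicator measurableSet_Ioo]
    by_cases ht : 0 < t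
    · rw [if_pos ht]
      have hint : IntegrableOn (fun a => (t-a)^n / n.factorial) (Set.Ioo 0 t) volume := by
        exact ((Continuous.integrableOn_Icc (by fun_prop))).mono_set Set.Ioo_subset_Icc_self
      rw [← MeasureTheory.ofReal_integral_eq_lintegral_ofReal hint]
      · congr 1
        rw [← MeasureTheory.integral_Ioc_eq_integral_Ioo,
          ← intervalIntegral.integral_of_le ht.le]
        rw [intervalIntegral.integral_congr
          (g := fun x => (fun u : ℝ => u ^ n / n.factorial) (t - x)) (fun x _ => rfl)]
        rw [intervalIntegral.integral_comp_sub_left (fun u : ℝ => u ^ n / n.factorial) t]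
        simp only [sub_self, sub_zero]
        rw [intervalIntegral.integral_div, integral_pow]
        rw [Nat.factorial_succ]
        push_cast
        field_simp
        simp
      · filter_upwards [self_mem_ae_restrict measurableSet_Ioo] with a ha
        have : 0 ≤ (t - a)^n := pow_nonneg (by linarith [ha.2]) n
        positivity
    · rw [if_neg ht, Set.Ioo_eq_empty (fun h : (0:ℝ) < t => ht h)]
      simp

def Aset (n j : ℕ) (x t : ℝ) : Set (Fin n → ℝ) :=
  {z | (∀ i : Fin n, (i:ℕ) < j → 0 < z i ∧ z i ≤ x)
    ∧ (∀ i : Fin n, j ≤ (i:ℕ) → 0 < z i) ∧ ∑ i, z i < t}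

lemma measurableSet_Aset (n j : ℕ) (x t : ℝ) : MeasurableSet (Aset n j x t) := by
  have h1 : MeasurableSet {z : Fin n → ℝ | ∀ i : Fin n, (i:ℕ) < j → 0 < z i ∧ z i ≤ x} := by
    have : {z : Fin n → ℝ | ∀ i : Fin n, (i:ℕ) < j → 0 < z i ∧ z i ≤ x}
        = ⋂ i : Fin n, {z | (i:ℕ) < j → 0 < z i ∧ z i ≤ x} := by ext; simp
    rw [this]
    refine MeasurableSet.iInter fun i => ?_
    by_cases hij : (i:ℕ) < j
    · simp only [hij, forall_true_left]
      exact (measurableSet_lt measurable_const (measurable_pi_apply i)).inter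
        (measurableSet_le (measurable_pi_apply i) measurable_const)
    · exact MeasurableSet.univ.congr (by ext; simp [hij])
  have h2 : MeasurableSet {z : Fin n → ℝ | ∀ i : Fin n, j ≤ (i:ℕ) → 0 < z i} := by
    have : {z : Fin n → ℝ | ∀ i : Fin n, j ≤ (i:ℕ) → 0 < z i}
        = ⋂ i : Fin n, {z | j ≤ (i:ℕ) → 0 < z i} := by ext; simp
    rw [this]
    refine MeasurableSet.iInter fun i => ?_
    by_cases hij : j ≤ (i:ℕ)
    · simp only [hij, forall_true_left]
      exact measurableSet_lt measurable_const (measurable_pi_apply i)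
    · exact MeasurableSet.univ.congr (by ext; simp [hij])
  have h3 : MeasurableSet {z : Fin n → ℝ | ∑ i, z i < t} :=
    measurableSet_lt (Finset.univ.measurable_sum fun i _ => measurable_pi_apply i)
      measurable_const
  exact (h1.inter (h2.inter h3))

lemma Aset_subset (n j : ℕ) (x t : ℝ) :
    Aset n j x t ⊆ {z : Fin n → ℝ | (∀ i, 0 < z i) ∧ ∑ i, z i < t} := by
  rintro z ⟨h1, h2, h3⟩
  refine ⟨fun i => ?_, h3⟩
  by_cases hij : (i:ℕ) < j
  · exact (h1 i hij).1
  · exact h2 i (not_lt.mp hij)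

lemma Aset_zero (n : ℕ) (x t : ℝ) :
    Aset n 0 x t = {z : Fin n → ℝ | (∀ i, 0 < z i) ∧ ∑ i, z i < t} := by
  ext z; simp [Aset]

lemma Aset_inter_eq (n j : ℕ) (hj : j < n) (x t : ℝ) (hx : 0 < x) :
    Aset n j x t ∩ {z | x < z ⟨j, hj⟩}
      = (fun z => z + fun i => if i = (⟨j, hj⟩ : Fin n) then -x else 0) ⁻¹'
          Aset n j x (t - x) := by
  have hsum : ∀ z : Fin n → ℝ,
      ∑ i : Fin n, (z i + if i = (⟨j, hj⟩ : Fin n) then -x else 0) = (∑ i, z i) - x := by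
    intro z
    rw [Finset.sum_add_distrib, Finset.sum_ite_eq' Finset.univ (⟨j, hj⟩ : Fin n) fun _ => -x]
    simp [sub_eq_add_neg]
  ext z
  simp only [Set.mem_inter_iff, Set.mem_setOf_eq, Set.mem_preimage, Aset, Pi.add_apply, hsum]
  constructor
  · rintro ⟨⟨h1, h2, h3⟩, h4⟩
    refine ⟨fun i hij => ?_, fun i hij => ?_, by linarith⟩
    · have : i ≠ (⟨j, hj⟩ : Fin n) := by
        intro h; rw [h] at hij; exact absurd hij (by simp)
      simpa [this] using h1 i hij
    · by_cases h : i = (⟨j, hj⟩ : Fin n)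
      · subst h; simpa using by linarith
      · simpa [h] using h2 i hij
  · rintro ⟨h1, h2, h3⟩
    have hjf : 0 < z ⟨j, hj⟩ - x := by simpa using h2 ⟨j, hj⟩ le_rfl
    refine ⟨⟨fun i hij => ?_, fun i hij => ?_, by linarith⟩, by linarith⟩
    · have : i ≠ (⟨j, hj⟩ : Fin n) := by
        intro h; rw [h] at hij; exact absurd hij (by simp)
      simpa [this] using h1 i hij
    · by_cases h : i = (⟨j, hj⟩ : Fin n)
      · subst h; linarith
      · simpa [h] using h2 i hij

lemma Aset_succ (n j : ℕ) (hj : j < n) (x t : ℝ) :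
    Aset n (j+1) x t = Aset n j x t \ (Aset n j x t ∩ {z | x < z ⟨j, hj⟩}) := by
  ext z
  simp only [Aset, Set.mem_diff, Set.mem_inter_iff, Set.mem_setOf_eq]
  constructor
  · rintro ⟨h1, h2, h3⟩
    have hA : (∀ i : Fin n, (i:ℕ) < j → 0 < z i ∧ z i ≤ x)
        ∧ (∀ i : Fin n, j ≤ (i:ℕ) → 0 < z i) ∧ ∑ i, z i < t := by
      refine ⟨fun i hij => h1 i (Nat.lt_succ_of_lt hij), fun i hij => ?_, h3⟩
      rcases eq_or_lt_of_le hij with h | h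
      · exact (h1 i (by omega)).1
      · exact h2 i h
    refine ⟨hA, ?_⟩
    rintro ⟨-, hlt⟩
    exact absurd hlt (not_lt.mpr (h1 ⟨j, hj⟩ (by simp)).2)
  · rintro ⟨⟨h1, h2, h3⟩, h4⟩
    have hle : z ⟨j, hj⟩ ≤ x := by
      by_contra h
      exact h4 ⟨⟨h1, h2, h3⟩, lt_of_not_ge h⟩
    refine ⟨fun i hij => ?_, fun i hij => h2 i (by omega), h3⟩
    rcases Nat.lt_succ_iff_lt_or_eq.mp hij with h | h
    · exact h1 i h
    · have : i = (⟨j, hj⟩ : Fin n) := Fin.ext h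
      subst this
      exact ⟨h2 _ le_rfl, hle⟩

lemma pascal_sum (j : ℕ) (g : ℕ → ℝ) :
    ∑ s ∈ Finset.range (j+2), (-1:ℝ)^s * ((j+1).choose s) * g s
      = (∑ s ∈ Finset.range (j+1), (-1:ℝ)^s * (j.choose s) * g s)
        - (∑ s ∈ Finset.range (j+1), (-1:ℝ)^s * (j.choose s) * g (s+1)) := by
  rw [Finset.sum_range_succ' (fun s => (-1:ℝ)^s * ((j+1).choose s) * g s) (j+1)]
  rw [Finset.sum_range_succ' (fun s => (-1:ℝ)^s * (j.choose s) * g s) j]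
  rw [Finset.sum_range_succ (fun s => (-1:ℝ)^s * (j.choose s) * g (s+1)) j]
  have expand : ∀ s : ℕ, (-1:ℝ)^(s+1) * (((j+1).choose (s+1) : ℕ) : ℝ) * g (s+1)
      = -((-1:ℝ)^s * (j.choose s) * g (s+1)) + -((-1:ℝ)^s * (j.choose (s+1)) * g (s+1)) := by
    intro s
    rw [Nat.choose_succ_succ]
    push_cast
    ring
  rw [Finset.sum_congr rfl (fun s _ => expand s), Finset.sum_add_distrib,
    Finset.sum_neg_distrib, Finset.sum_neg_distrib,
    Finset.sum_range_succ (fun s => (-1:ℝ)^s * (j.choose s) * g (s+1)) j,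
    Finset.sum_range_succ (fun s => (-1:ℝ)^s * (j.choose (s+1)) * g (s+1)) j]
  have h1 : ∀ s ∈ Finset.range j, (-1:ℝ)^s * (j.choose (s+1)) * g (s+1)
      = (-1:ℝ)^(s+1) * (j.choose (s+1)) * g (s+1) * (-1) := by
    intro s _; ring
  rw [Finset.sum_congr rfl h1]
  have h2 : ∑ s ∈ Finset.range j, (-1:ℝ)^(s+1) * (j.choose (s+1)) * g (s+1) * (-1)
      = (∑ s ∈ Finset.range j, (-1:ℝ)^(s+1) * (j.choose (s+1)) * g (s+1)) * (-1) :=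
    (Finset.sum_mul _ _ _).symm
  rw [h2]
  simp only [Nat.choose_succ_self, Nat.cast_zero, Nat.choose_self, Nat.cast_one,
    Nat.choose_zero_right, pow_zero]
  ring

lemma vol_Aset_ne_top (n j : ℕ) (x t : ℝ) : volume (Aset n j x t) ≠ ⊤ := by
  refine ne_top_of_le_ne_top ?_ (measure_mono (Aset_subset n j x t))
  rw [simplex_vol]
  split <;> simp

lemma vol_Aset_rec (n j : ℕ) (hj : j < n) (x t : ℝ) (hx : 0 < x) :
    (volume (Aset n (j+1) x t)).toReal
      = (volume (Aset n j x t)).toReal - (volume (Aset n j x (t-x))).toReal := by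
  have hD : volume (Aset n j x t ∩ {z | x < z ⟨j, hj⟩}) = volume (Aset n j x (t-x)) := by
    rw [Aset_inter_eq n j hj x t hx]
    exact measure_preimage_add_right volume _ _
  rw [Aset_succ n j hj x t]
  rw [measure_diff Set.inter_subset_left
    ((measurableSet_Aset n j x t).inter
      (measurableSet_lt measurable_const (measurable_pi_apply _))).nullMeasurableSet
    (ne_top_of_le_ne_top (vol_Aset_ne_top n j x t) (measure_mono Set.inter_subset_left))]
  rw [hD, ENNReal.toReal_sub_of_le ?hle (vol_Aset_ne_top n j x t)]
  case hle =>
    rw [← hD]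
    exact measure_mono Set.inter_subset_left

lemma vol_Aset_eq (n : ℕ) (hn : n ≠ 0) (x : ℝ) (hx : 0 < x) :
    ∀ j, j ≤ n → ∀ t : ℝ, (volume (Aset n j x t)).toReal
      = ∑ s ∈ Finset.range (j+1),
          (-1:ℝ)^s * (j.choose s) * ((max 0 (t - s*x))^n / n.factorial) := by
  intro j
  induction j with
  | zero =>
    intro _ t
    rw [Aset_zero, simplex_vol]
    rw [Finset.sum_range_one]
    norm_num
    by_cases ht : 0 < t
    · rw [if_pos ht, ENNReal.toReal_ofReal (by positivity), max_eq_right ht.le]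
    · rw [if_neg ht, max_eq_left (not_lt.mp ht)]
      rw [zero_pow hn]
      simp
  | succ j ih =>
    intro hj t
    have hjn : j < n := hj
    rw [vol_Aset_rec n j hjn x t hx, ih (le_of_lt hjn) t, ih (le_of_lt hjn) (t-x)]
    rw [show j + 1 + 1 = j + 2 from rfl]
    rw [pascal_sum j (fun s => (max 0 (t - s*x))^n / n.factorial)]
    congr 1
    refine Finset.sum_congr rfl fun s _ => ?_
    have : t - x - (s:ℝ)*x = t - ((s:ℕ)+1 : ℕ)*x := by push_cast; ring
    rw [this]


/-- If `G₁,…,Gₙ` have joint density `n!` on `{z : zᵢ > 0, ∑ zᵢ < 1}`, then for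
`j ∈ {0,…,n}`, `x ∈ (0,1)`, `y ∈ (0,1]`,
`P(Gᵢ ≤ x ∀ i ≤ j, Gᵢ > x ∀ j < i ≤ n, ∑ Gᵢ < y) = ∑_{r=0}^j (-1)^{j-r} C(j,r) (y-(n-r)x)₊ⁿ`. -/
theorem spacings_partial_probability
    {Ω : Type} [MeasurableSpace Ω] (P : Measure Ω) [IsProbabilityMeasure P]
    (n : ℕ) (hn : 1 ≤ n) (G : ℕ → Ω → ℝ)
    (hdens : Measure.map (fun ω => fun i : Fin n => G ((i : ℕ) + 1) ω) P
      = (volume : Measure (Fin n → ℝ)).withDensity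
          (fun z => if (∀ i, 0 < z i) ∧ ∑ i, z i < 1 then (Nat.factorial n : ℝ≥0∞) else 0))
    (j : ℕ) (hj : j ≤ n) (x : ℝ) (hx : x ∈ Set.Ioo (0 : ℝ) 1) (y : ℝ)
    (hy : y ∈ Set.Ioc (0 : ℝ) 1) :
    (P {ω | (∀ i, 1 ≤ i → i ≤ j → G i ω ≤ x) ∧ (∀ i, j < i → i ≤ n → x < G i ω)
        ∧ ∑ i ∈ Finset.Icc 1 n, G i ω < y}).toReal
      = ∑ r ∈ Finset.range (j + 1),
          (-1 : ℝ) ^ (j - r) * (Nat.choose j r) * (max 0 (y - ((n : ℝ) - r) * x)) ^ n := by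
  obtain ⟨hx0, hx1⟩ := hx
  obtain ⟨hy0, hy1⟩ := hy
  set f : Ω → (Fin n → ℝ) := fun ω => fun i : Fin n => G ((i : ℕ) + 1) ω with hf
  set B : Set (Fin n → ℝ) := {z | (∀ i : Fin n, (i:ℕ)+1 ≤ j → z i ≤ x)
    ∧ (∀ i : Fin n, j < (i:ℕ)+1 → x < z i) ∧ ∑ i, z i < y} with hB
  -- measurability of B
  have hBm : MeasurableSet B := by
    have h1 : MeasurableSet {z : Fin n → ℝ | ∀ i : Fin n, (i:ℕ)+1 ≤ j → z i ≤ x} := by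
      have : {z : Fin n → ℝ | ∀ i : Fin n, (i:ℕ)+1 ≤ j → z i ≤ x}
          = ⋂ i : Fin n, {z | (i:ℕ)+1 ≤ j → z i ≤ x} := by ext; simp
      rw [this]
      refine MeasurableSet.iInter fun i => ?_
      by_cases hij : (i:ℕ)+1 ≤ j
      · simp only [hij, forall_true_left]
        exact measurableSet_le (measurable_pi_apply i) measurable_const
      · exact MeasurableSet.univ.congr (by ext; simp [hij])
    have h2 : MeasurableSet {z : Fin n → ℝ | ∀ i : Fin n, j < (i:ℕ)+1 → x < z i} := by
      have : {z : Fin n → ℝ | ∀ i : Fin n, j < (i:ℕ)+1 → x < z i}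
          = ⋂ i : Fin n, {z | j < (i:ℕ)+1 → x < z i} := by ext; simp
      rw [this]
      refine MeasurableSet.iInter fun i => ?_
      by_cases hij : j < (i:ℕ)+1
      · simp only [hij, forall_true_left]
        exact measurableSet_lt measurable_const (measurable_pi_apply i)
      · exact MeasurableSet.univ.congr (by ext; simp [hij])
    have h3 : MeasurableSet {z : Fin n → ℝ | ∑ i, z i < y} :=
      measurableSet_lt (Finset.univ.measurable_sum fun i _ => measurable_pi_apply i)
        measurable_const
    exact h1.inter (h2.inter h3)
  -- the density measure of a measurable set
  have hnu : ∀ s : Set (Fin n → ℝ), MeasurableSet s →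
      (volume.withDensity
        (fun z => if (∀ i, 0 < z i) ∧ ∑ i, z i < 1 then (n.factorial : ℝ≥0∞) else 0)) s
      = (n.factorial : ℝ≥0∞) * volume (s ∩ {z | (∀ i, 0 < z i) ∧ ∑ i, z i < 1}) := by
    intro s hs
    rw [withDensity_apply _ hs]
    have hind : (fun z : Fin n → ℝ =>
        if (∀ i, 0 < z i) ∧ ∑ i, z i < 1 then (n.factorial : ℝ≥0∞) else 0)
        = Set.indicator {z : Fin n → ℝ | (∀ i, 0 < z i) ∧ ∑ i, z i < 1}
            (fun _ => (n.factorial : ℝ≥0∞)) := by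
      ext z
      by_cases h : (∀ i, 0 < z i) ∧ ∑ i, z i < 1 <;> simp [Set.indicator, h]
    rw [hind, setLIntegral_indicator (measurableSet_simplex' n 1)]
    rw [setLIntegral_const]
    rw [Set.inter_comm]
  -- f is a.e.-measurable
  have hAE : AEMeasurable f P := by
    by_contra hc
    have h0 : Measure.map f P = 0 := Measure.map_of_not_aemeasurable hc
    rw [h0] at hdens
    have h1 := congrArg (fun μ : Measure (Fin n → ℝ) => μ Set.univ) hdens
    simp only [Measure.coe_zero, Pi.zero_apply] at h1
    rw [hnu Set.univ MeasurableSet.univ, Set.univ_inter, simplex_vol, if_pos one_pos] at h1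
    have : ((n.factorial : ℝ≥0∞) * ENNReal.ofReal ((1:ℝ) ^ n / n.factorial)) ≠ 0 := by
      apply mul_ne_zero
      · exact_mod_cast Nat.factorial_ne_zero n
      · rw [one_pow]
        simp only [ne_eq, ENNReal.ofReal_eq_zero, not_le]
        positivity
    exact this h1.symm
  -- event as preimage
  have hEvent : {ω | (∀ i, 1 ≤ i → i ≤ j → G i ω ≤ x) ∧ (∀ i, j < i → i ≤ n → x < G i ω)
      ∧ ∑ i ∈ Finset.Icc 1 n, G i ω < y} = f ⁻¹' B := by
    have hsum : ∀ ω, ∑ i ∈ Finset.Icc 1 n, G i ω = ∑ i : Fin n, G ((i:ℕ)+1) ω := by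
      intro ω
      rw [Fin.sum_univ_eq_sum_range (fun i => G (i+1) ω) n]
      have : Finset.Icc 1 n = Finset.Ico 1 (n+1) := by
        ext i; simp [Nat.lt_succ_iff]
      rw [this, Finset.sum_Ico_eq_sum_range]
      simp only [Nat.add_sub_cancel]
      exact Finset.sum_congr rfl fun i _ => by rw [add_comm]
    ext ω
    simp only [Set.mem_setOf_eq, Set.mem_preimage, hB, hf]
    constructor
    · rintro ⟨h1, h2, h3⟩
      refine ⟨fun i hi => h1 _ (Nat.le_add_left 1 i) hi,
        fun i hi => h2 _ hi (by omega), ?_⟩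
      rw [← hsum ω]; exact h3
    · rintro ⟨h1, h2, h3⟩
      refine ⟨fun i h1i hij => ?_, fun i hji hin => ?_, ?_⟩
      · have hlt : i - 1 < n := by omega
        have := h1 ⟨i - 1, hlt⟩ (by simp; omega)
        simpa [show i - 1 + 1 = i by omega] using this
      · have hlt : i - 1 < n := by omega
        have := h2 ⟨i - 1, hlt⟩ (by simp; omega)
        simpa [show i - 1 + 1 = i by omega] using this
      · rw [hsum ω]; exact h3
  rw [hEvent, ← Measure.map_apply_of_aemeasurable hAE hBm, hdens, hnu B hBm]
  -- identify B ∩ simplex with a translate of Aset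
  set c : Fin n → ℝ := fun i => if j ≤ (i:ℕ) then -x else 0 with hc
  set t : ℝ := y - ((n:ℝ) - j) * x with ht
  have hcsum : ∑ i : Fin n, c i = -(((n:ℝ) - j) * x) := by
    rw [hc]
    rw [Fin.sum_univ_eq_sum_range (fun i => if j ≤ i then -x else 0) n]
    rw [Finset.sum_ite, Finset.sum_const, Finset.sum_const, smul_zero, add_zero]
    have : Finset.filter (fun i => j ≤ i) (Finset.range n) = Finset.Ico j n := by
      ext i; simp [Finset.mem_filter, Finset.mem_range, Finset.mem_Ico]; omega
    rw [this, Nat.card_Ico, nsmul_eq_mul, Nat.cast_sub hj]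
    ring
  have hT : B ∩ {z : Fin n → ℝ | (∀ i, 0 < z i) ∧ ∑ i, z i < 1}
      = (fun z => z + c) ⁻¹' Aset n j x t := by
    ext z
    have hzc : ∀ i : Fin n, (z + c) i = z i + c i := fun i => rfl
    have hzs : ∑ i : Fin n, (z i + if j ≤ (i:ℕ) then -x else 0)
        = (∑ i, z i) - ((n:ℝ) - j) * x := by
      rw [Finset.sum_add_distrib]
      have h := hcsum
      simp only [hc] at h
      rw [h]; ring
    simp only [Set.mem_inter_iff, Set.mem_preimage, hB, Set.mem_setOf_eq, Aset, hzc, hc, Pi.add_apply, hzs]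
    constructor
    · rintro ⟨⟨h1, h2, h3⟩, h4, h5⟩
      refine ⟨fun i hij => ?_, fun i hij => ?_, by rw [ht]; linarith⟩
      · rw [if_neg (by omega)]
        exact ⟨by simpa using h4 i, by simpa using h1 i (by omega)⟩
      · rw [if_pos hij]
        have := h2 i (by omega)
        linarith
    · rintro ⟨h1, h2, h3⟩
      have hz0 : ∀ i : Fin n, 0 < z i := by
        intro i
        by_cases hij : (i:ℕ) < j
        · have := h1 i hij
          rw [if_neg (by omega)] at this
          simpa using this.1
        · have := h2 i (by omega)
          rw [if_pos (by omega)] at this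
          linarith
      have hzy : ∑ i, z i < y := by
        rw [ht] at h3; linarith
      refine ⟨⟨fun i hij => ?_, fun i hij => ?_, hzy⟩, hz0, by linarith⟩
      · have := h1 i (by omega)
        rw [if_neg (by omega)] at this
        simpa using this.2
      · have := h2 i (by omega)
        rw [if_pos (by omega)] at this
        linarith
  rw [hT, measure_preimage_add_right volume c (Aset n j x t)]
  rw [ENNReal.toReal_mul, ENNReal.toReal_natCast]
  rw [vol_Aset_eq n (by omega) x hx0 j hj t]
  rw [Finset.mul_sum]
  rw [← Finset.sum_range_reflect
    (fun r => (-1 : ℝ) ^ (j - r) * (Nat.choose j r) * (max 0 (y - ((n : ℝ) - r) * x)) ^ n)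
    (j+1)]
  refine Finset.sum_congr rfl fun s hs => ?_
  have hs' : s ≤ j := by simpa [Nat.lt_succ_iff] using hs
  have e1 : j + 1 - 1 - s = j - s := by omega
  have e2 : j - (j - s) = s := by omega
  have e3 : j.choose (j - s) = j.choose s := Nat.choose_symm hs'
  have e4 : ((j - s : ℕ) : ℝ) = (j:ℝ) - s := by
    rw [Nat.cast_sub hs']
  have e5 : y - ((n : ℝ) - ((j:ℝ) - s)) * x = t - s * x := by
    rw [ht]; ring
  rw [e1, e2, e3, e4, e5]
  have hfac : (n.factorial : ℝ) ≠ 0 := by exact_mod_cast Nat.factorial_ne_zero n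
  field_simp
end

section
/- For integers n ≥ 1, j ∈ {1,...,n}, and r ∈ {0,...,n}: ((n+1)/(n-r+1)) · (C(n,j)C(j,r) + C(n,j-1)C(j-1,r)) = C(n+1,j)C(j,r). -/
lemma nat_binomial_identity (n j r : ℕ) (hj1 : 1 ≤ j) (hj2 : j ≤ n) (hr : r ≤ n) :
    (n + 1) * (Nat.choose n j * Nat.choose j r + Nat.choose n (j - 1) * Nat.choose (j - 1) r)
      = (n + 1 - r) * (Nat.choose (n + 1) j * Nat.choose j r) := by
  have key : Nat.choose n r * (n + 1) = Nat.choose (n + 1) r * (n + 1 - r) :=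
    Nat.choose_mul_succ_eq n r
  by_cases hrj : r ≤ j
  · by_cases hrj1 : r ≤ j - 1
    · rw [Nat.choose_mul (n := n) hrj, Nat.choose_mul (n := n) hrj1,
        Nat.choose_mul (n := n + 1) hrj]
      have h1 : j - 1 - r = j - r - 1 := by omega
      have h3 : n + 1 - r = n - r + 1 := by omega
      have h2 : (n - r).choose (j - r) + (n - r).choose (j - r - 1)
          = (n - r + 1).choose (j - r) := by
        have h5 := Nat.choose_succ_succ' (n - r) (j - r - 1)
        rw [show j - r - 1 + 1 = j - r by omega] at h5
        omega
      rw [h1, h3]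
      calc (n + 1) * (Nat.choose n r * (n - r).choose (j - r)
              + Nat.choose n r * (n - r).choose (j - r - 1))
          = (Nat.choose n r * (n + 1)) * ((n - r).choose (j - r)
              + (n - r).choose (j - r - 1)) := by ring
        _ = (Nat.choose (n + 1) r * (n + 1 - r)) * ((n - r + 1).choose (j - r)) := by
              rw [key, h2]
        _ = (n - r + 1) * (Nat.choose (n + 1) r * (n - r + 1).choose (j - r)) := by
              rw [show n + 1 - r = n - r + 1 from h3]; ring
    · obtain rfl : j = r := by omega
      rw [Nat.choose_self, Nat.choose_eq_zero_of_lt (by omega : j - 1 < j)]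
      have : Nat.choose n j * (n + 1) = Nat.choose (n + 1) j * (n + 1 - j) :=
        Nat.choose_mul_succ_eq n j
      calc (n + 1) * (Nat.choose n j * 1 + Nat.choose n (j - 1) * 0)
          = Nat.choose n j * (n + 1) := by ring
        _ = Nat.choose (n + 1) j * (n + 1 - j) := this
        _ = (n + 1 - j) * (Nat.choose (n + 1) j * 1) := by ring
  · rw [Nat.choose_eq_zero_of_lt (show j < r by omega),
      Nat.choose_eq_zero_of_lt (show j - 1 < r by omega)]
    ring

/-- For `n ≥ 1`, `1 ≤ j ≤ n`, `0 ≤ r ≤ n`: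
`((n+1)/(n-r+1)) (C(n,j)C(j,r) + C(n,j-1)C(j-1,r)) = C(n+1,j)C(j,r)`. -/
theorem binomial_identity (n j r : ℕ) (hn : 1 ≤ n) (hj1 : 1 ≤ j) (hj2 : j ≤ n) (hr : r ≤ n) :
    ((n : ℝ) + 1) / ((n : ℝ) - r + 1)
        * ((Nat.choose n j * Nat.choose j r : ℕ)
            + (Nat.choose n (j - 1) * Nat.choose (j - 1) r : ℕ))
      = (Nat.choose (n + 1) j * Nat.choose j r : ℕ) := by
  have hd : ((n : ℝ) - r + 1) ≠ 0 := by
    have : (r : ℝ) ≤ n := by exact_mod_cast hr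
    linarith
  rw [div_mul_eq_mul_div, div_eq_iff hd]
  have key := nat_binomial_identity n j r hj1 hj2 hr
  have hcast : ((n : ℝ) - r + 1) = ((n + 1 - r : ℕ) : ℝ) := by
    have : r ≤ n + 1 := by omega
    push_cast [this]
    ring
  rw [hcast]
  have := congrArg (Nat.cast : ℕ → ℝ) key
  push_cast at this ⊢
  linarith
end

section
/- For positive reals t_1,...,t_{n+1}, the integral of exp(-t_1 x_1 - ... - t_{n+1} x_{n+1}) over the simplex {0 < x_1 < ... < x_{n+1}} equals 1/(t_{n+1}(t_{n+1}+t_n)···(t_{n+1}+t_n+...+t_1)). -/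
open MeasureTheory Finset Set

lemma aux_integral_exp_neg_mul {s : ℝ} (hs : 0 < s) :
    ∫ x in Set.Ioi (0:ℝ), Real.exp (-(s * x)) = 1 / s := by
  have := MeasureTheory.integral_comp_mul_left_Ioi (fun x => Real.exp (-x)) 0 hs
  simp only [mul_zero, smul_eq_mul] at this
  rw [show (fun x : ℝ => Real.exp (-(s * x))) = fun x => (fun y => Real.exp (-y)) (s * x) from rfl] at *
  rw [this, integral_exp_neg_Ioi_zero]
  ring

lemma aux_fin_lt_succ_iff {n : ℕ} (j : Fin n) (k : Fin (n+1)) :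
    k < j.succ ↔ k ≤ j.castSucc := by
  rw [Fin.lt_def, Fin.le_def]
  simp only [Fin.val_succ, Fin.coe_castSucc]
  omega

lemma aux_filter_succ {n : ℕ} (j : Fin n) :
    Finset.univ.filter (fun k : Fin (n+1) => k ≤ j.succ)
      = insert j.succ (Finset.univ.filter (fun k => k ≤ j.castSucc)) := by
  ext k
  simp only [Finset.mem_filter, Finset.mem_univ, true_and, Finset.mem_insert]
  constructor
  · intro hk
    rcases eq_or_lt_of_le hk with h | h
    · exact Or.inl h
    · exact Or.inr ((aux_fin_lt_succ_iff j k).mp h)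
  · rintro (rfl | h)
    · exact le_refl _
    · exact h.trans (Fin.castSucc_lt_succ (i := j)).le

/-- For positive reals `t₁,…,t_{n+1}`, the integral of `exp(-∑ tᵢ xᵢ)` over the simplex
`{0 < x₁ < ⋯ < x_{n+1}}` equals `1/∏_{k=1}^{n+1} (t_{n+1} + ⋯ + t_k)`. -/
theorem integral_exp_over_simplex (n : ℕ) (t : Fin (n + 1) → ℝ) (ht : ∀ i, 0 < t i) :
    ∫ x in {x : Fin (n + 1) → ℝ | 0 < x 0 ∧ StrictMono x},
        Real.exp (-∑ i, t i * x i) ∂(volume : Measure (Fin (n + 1) → ℝ))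
      = 1 / ∏ k : Fin (n + 1), ∑ j ∈ Finset.univ.filter (fun j => k ≤ j), t j := by
  classical
  set s : Fin (n+1) → ℝ := fun k => ∑ j ∈ Finset.univ.filter (fun j => k ≤ j), t j with hs_def
  have hs_pos : ∀ k, 0 < s k := fun k =>
    Finset.sum_pos (fun j _ => ht j) ⟨k, by simp⟩
  set M : Matrix (Fin (n+1)) (Fin (n+1)) ℝ := fun i j => if j ≤ i then 1 else 0 with hM_def
  have hMtri : M.BlockTriangular OrderDual.toDual := by
    intro i j hij
    simp only [hM_def]
    rw [if_neg]
    exact fun h => absurd h (not_le.mpr hij)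
  have hdet : M.det = 1 := by
    rw [Matrix.det_of_lowerTriangular M hMtri]
    simp [hM_def]
  have hdetL : LinearMap.det (Matrix.toLin' M) = 1 := by
    rw [LinearMap.det_toLin', hdet]
  have hmp : MeasurePreserving (Matrix.toLin' M) volume volume := by
    refine ⟨(Matrix.toLin' M).continuous_of_finiteDimensional.measurable, ?_⟩
    rw [Real.map_linearMap_volume_pi_eq_smul_volume_pi (by rw [hdetL]; norm_num)]
    simp [hdetL]
  have hinv : Invertible M := M.invertibleOfIsUnitDet (by rw [hdet]; exact isUnit_one)
  have hemb : MeasurableEmbedding (Matrix.toLin' M) := by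
    let e := M.toLinearEquiv' hinv
    have he : (⇑(Matrix.toLin' M) : (Fin (n+1) → ℝ) → (Fin (n+1) → ℝ))
        = ⇑(e.toContinuousLinearEquiv.toHomeomorph) := rfl
    rw [he]
    exact e.toContinuousLinearEquiv.toHomeomorph.measurableEmbedding
  rw [← hmp.setIntegral_preimage_emb hemb]
  have happ : ∀ (y : Fin (n+1) → ℝ) (i : Fin (n+1)),
      Matrix.toLin' M y i = ∑ j ∈ Finset.univ.filter (fun j => j ≤ i), y j := by
    intro y i
    rw [Matrix.toLin'_apply]
    show ∑ j, M i j * y j = _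
    rw [Finset.sum_filter]
    refine Finset.sum_congr rfl fun j _ => ?_
    simp only [hM_def]
    by_cases h : j ≤ i <;> simp [h]
  have h0filter : Finset.univ.filter (fun j : Fin (n+1) => j ≤ (0 : Fin (n+1))) = {0} := by
    ext j; simp [Fin.le_zero_iff]
  have hpre : (Matrix.toLin' M) ⁻¹' {x : Fin (n + 1) → ℝ | 0 < x 0 ∧ StrictMono x}
      = Set.univ.pi (fun _ => Set.Ioi (0:ℝ)) := by
    ext y
    simp only [Set.mem_preimage, Set.mem_setOf_eq, Set.mem_pi, Set.mem_univ, Set.mem_Ioi,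
      forall_true_left]
    constructor
    · rintro ⟨h0, hsm⟩ i
      rcases eq_or_ne i 0 with rfl | hi
      · rw [happ, h0filter] at h0
        simpa using h0
      · obtain ⟨j, rfl⟩ := Fin.eq_succ_of_ne_zero hi
        have hlt := hsm (Fin.castSucc_lt_succ (i := j))
        rw [happ, happ, aux_filter_succ, Finset.sum_insert (by
          simp only [Finset.mem_filter, Finset.mem_univ, true_and]
          exact fun h => absurd h (not_le.mpr (Fin.castSucc_lt_succ (i := j))))] at hlt
        linarith
    · intro hy
      refine ⟨?_, ?_⟩
      · rw [happ, h0filter]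
        simpa using hy 0
      · rw [Fin.strictMono_iff_lt_succ]
        intro j
        rw [happ, happ, aux_filter_succ, Finset.sum_insert (by
          simp only [Finset.mem_filter, Finset.mem_univ, true_and]
          exact fun h => absurd h (not_le.mpr (Fin.castSucc_lt_succ (i := j))))]
        linarith [hy j.succ]
  rw [hpre]
  have hint : ∀ y : Fin (n+1) → ℝ,
      Real.exp (-∑ i, t i * (Matrix.toLin' M) y i) = ∏ j, Real.exp (-(s j * y j)) := by
    intro y
    rw [← Real.exp_sum]
    congr 1
    have hsum : ∑ i, t i * Matrix.toLin' M y i = ∑ j, s j * y j := by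
      calc ∑ i, t i * Matrix.toLin' M y i
          = ∑ i, ∑ j, if j ≤ i then t i * y j else 0 := by
            refine Finset.sum_congr rfl fun i _ => ?_
            rw [happ, Finset.mul_sum, Finset.sum_filter]
        _ = ∑ j, ∑ i, if j ≤ i then t i * y j else 0 := Finset.sum_comm
        _ = ∑ j, s j * y j := by
            refine Finset.sum_congr rfl fun j _ => ?_
            rw [hs_def, Finset.sum_mul, Finset.sum_filter]
    rw [hsum, ← Finset.sum_neg_distrib]
  simp_rw [hint]
  rw [← integral_indicator (MeasurableSet.univ_pi (fun _ => measurableSet_Ioi))]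
  have hind : (Set.univ.pi fun _ => Set.Ioi (0:ℝ)).indicator
        (fun y => ∏ j, Real.exp (-(s j * y j)))
      = fun y => ∏ j, (Set.Ioi (0:ℝ)).indicator (fun x => Real.exp (-(s j * x))) (y j) := by
    ext y
    by_cases hy : y ∈ Set.univ.pi fun _ => Set.Ioi (0:ℝ)
    · rw [Set.indicator_of_mem hy]
      refine Finset.prod_congr rfl fun j _ => ?_
      rw [Set.indicator_of_mem (hy j trivial)]
    · rw [Set.indicator_of_notMem hy]
      obtain ⟨j, hj⟩ : ∃ j, y j ∉ Set.Ioi (0:ℝ) := by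
        simpa [Set.mem_pi] using hy
      exact (Finset.prod_eq_zero (Finset.mem_univ j) (Set.indicator_of_notMem hj _)).symm
  rw [hind, MeasureTheory.integral_fintype_prod_volume_eq_prod
    (f := fun j => (Set.Ioi (0:ℝ)).indicator (fun x => Real.exp (-(s j * x))))]
  have hone : ∀ j, ∫ x, (Set.Ioi (0:ℝ)).indicator (fun x => Real.exp (-(s j * x))) x = 1 / s j := by
    intro j
    rw [integral_indicator measurableSet_Ioi]
    exact aux_integral_exp_neg_mul (hs_pos j)
  simp_rw [hone]
  rw [Finset.prod_div_distrib]
  simp [hs_def]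
end

section
/- For n ≥ 0 and 1 ≤ k ≤ n+1, the integral L_{n+1,k} := ∫_{0<x_1<...<x_{n+1}} x_k e^{-(x_1+...+x_{n+1})} dx equals (H_{n+1} - H_{n+1-k})/(n+1)!, where H_j is the j-th harmonic number. -/
open MeasureTheory Finset Set

namespace SimplexIntegralAux

/-- The lower-triangular matrix of all ones (on and below the diagonal). -/
def M (n : ℕ) : Matrix (Fin (n + 1)) (Fin (n + 1)) ℝ :=
  Matrix.of fun i j => if j ≤ i then 1 else 0

lemma T_apply (n : ℕ) (y : Fin (n + 1) → ℝ) (i : Fin (n + 1)) :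
    Matrix.toLin' (M n) y i = ∑ j, if j ≤ i then y j else 0 := by
  simp [Matrix.toLin'_apply, Matrix.mulVec, dotProduct, M, ite_mul]

lemma det_M (n : ℕ) : (M n).det = 1 := by
  have hBT : (M n).BlockTriangular OrderDual.toDual := by
    intro i j h
    have hij : i < j := OrderDual.toDual_lt_toDual.mp h
    simp [M, not_le.2 hij]
  rw [Matrix.det_of_lowerTriangular (M n) hBT]
  simp [M]

lemma T_zero (n : ℕ) (y : Fin (n + 1) → ℝ) : Matrix.toLin' (M n) y 0 = y 0 := by
  rw [T_apply]
  simp_rw [Fin.le_zero_iff]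
  simp

lemma T_succ (n : ℕ) (y : Fin (n + 1) → ℝ) (i : Fin n) :
    Matrix.toLin' (M n) y i.succ = Matrix.toLin' (M n) y i.castSucc + y i.succ := by
  rw [T_apply, T_apply]
  rw [show (∑ j, if j ≤ i.succ then y j else 0)
      = ∑ j, ((if j ≤ i.castSucc then y j else 0) + (if j = i.succ then y j else 0)) by
    refine Finset.sum_congr rfl fun j _ => ?_
    simp only [Fin.le_def, Fin.ext_iff, Fin.val_succ, Fin.coe_castSucc]
    split_ifs <;> first | omega | ring]
  rw [Finset.sum_add_distrib, Finset.sum_ite_eq' Finset.univ i.succ y]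
  simp

lemma T_preimage (n : ℕ) :
    (Matrix.toLin' (M n)) ⁻¹' {x : Fin (n + 1) → ℝ | 0 < x 0 ∧ StrictMono x}
      = Set.pi Set.univ fun _ => Ioi (0 : ℝ) := by
  ext y
  simp only [Set.mem_preimage, Set.mem_setOf_eq, Set.mem_pi, Set.mem_univ, Set.mem_Ioi,
    true_implies, Fin.strictMono_iff_lt_succ]
  constructor
  · rintro ⟨h0, hm⟩ j
    induction j using Fin.cases with
    | zero => rw [← T_zero n y]; exact h0
    | succ i =>
      have := hm i
      rw [T_succ] at this
      linarith
  · intro h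
    refine ⟨by rw [T_zero]; exact h 0, fun i => ?_⟩
    rw [T_succ]
    have := h i.succ
    linarith

lemma T_sum (n : ℕ) (y : Fin (n + 1) → ℝ) :
    ∑ i, Matrix.toLin' (M n) y i = ∑ j : Fin (n + 1), ((n + 1 - (j : ℕ) : ℕ) : ℝ) * y j := by
  simp_rw [T_apply]
  rw [Finset.sum_comm]
  refine Finset.sum_congr rfl fun j _ => ?_
  rw [← Finset.sum_filter]
  rw [show Finset.filter (fun i => j ≤ i) Finset.univ = Finset.Ici j by ext i; simp]
  rw [Finset.sum_const, Fin.card_Ici]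
  simp [nsmul_eq_mul]

lemma prod_c (n : ℕ) : (∏ i : Fin (n + 1), ((n + 1 - (i : ℕ) : ℕ) : ℝ)) = (n + 1).factorial := by
  rw [← Nat.cast_prod]
  congr 1
  rw [Fin.prod_univ_eq_prod_range (fun i => n + 1 - i) (n + 1)]
  rw [← Finset.prod_range_add_one_eq_factorial (n + 1)]
  rw [← Finset.prod_range_reflect (fun i => i + 1) (n + 1)]
  refine Finset.prod_congr rfl fun i hi => ?_
  have := Finset.mem_range.1 hi
  omega

lemma harmonic_sum (n k : ℕ) (hk : k ≤ n + 1) :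
    ∑ j ∈ Finset.range k, (((n + 1 - j : ℕ) : ℝ))⁻¹
      = (harmonic (n + 1) : ℝ) - (harmonic (n + 1 - k) : ℝ) := by
  induction k with
  | zero => simp
  | succ k ih =>
    rw [Finset.sum_range_succ, ih (by omega)]
    have h1 : n + 1 - k = (n - k) + 1 := by omega
    have h2 : ((harmonic (n + 1 - k) : ℚ) : ℝ)
        = (harmonic (n - k) : ℝ) + (((n + 1 - k : ℕ) : ℝ))⁻¹ := by
      rw [h1, harmonic_succ]
      push_cast
      norm_num
    rw [show n + 1 - (k + 1) = n - k from by omega]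
    rw [h2]
    ring

end SimplexIntegralAux

open SimplexIntegralAux in
/-- For `1 ≤ k ≤ n+1`, `∫_{0<x₁<⋯<x_{n+1}} x_k e^{-(x₁+⋯+x_{n+1})} dx
= (H_{n+1} - H_{n+1-k})/(n+1)!`. -/
theorem integral_coordinate_exp_over_simplex (n k : ℕ) (hk1 : 1 ≤ k) (hk2 : k ≤ n + 1) :
    ∫ x in {x : Fin (n + 1) → ℝ | 0 < x 0 ∧ StrictMono x},
        x ⟨k - 1, by omega⟩ * Real.exp (-∑ i, x i) ∂(volume : Measure (Fin (n + 1) → ℝ))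
      = ((harmonic (n + 1) : ℝ) - (harmonic (n + 1 - k) : ℝ))
          / (Nat.factorial (n + 1)) := by
  classical
  set S : Set (Fin (n + 1) → ℝ) := {x | 0 < x 0 ∧ StrictMono x} with hSdef
  set g : (Fin (n + 1) → ℝ) → ℝ :=
    fun x => x ⟨k - 1, by omega⟩ * Real.exp (-∑ i, x i) with hgdef
  set T : (Fin (n + 1) → ℝ) →ₗ[ℝ] (Fin (n + 1) → ℝ) := Matrix.toLin' (M n) with hTdef
  set c : Fin (n + 1) → ℝ := fun i => ((n + 1 - (i : ℕ) : ℕ) : ℝ) with hcdef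
  show (∫ x in S, g x) = ((harmonic (n + 1) : ℝ) - (harmonic (n + 1 - k) : ℝ))
      / (Nat.factorial (n + 1))
  have hc_pos : ∀ i, 0 < c i := fun i => by
    have hlt := i.isLt
    have h0 : 0 < n + 1 - (i : ℕ) := by omega
    simp only [hcdef]
    exact_mod_cast h0
  -- measurability facts
  have hg_cont : Continuous g :=
    (continuous_apply _).mul
      (Real.continuous_exp.comp (continuous_finset_sum _ fun i _ => continuous_apply i).neg)
  have hS_meas : MeasurableSet S := by
    have h1 : MeasurableSet {x : Fin (n + 1) → ℝ | 0 < x 0} :=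
      measurableSet_lt measurable_const (measurable_pi_apply 0)
    have h2 : MeasurableSet {x : Fin (n + 1) → ℝ | StrictMono x} := by
      have : {x : Fin (n + 1) → ℝ | StrictMono x}
          = ⋂ (p : Fin (n + 1) × Fin (n + 1)) (_ : p.1 < p.2), {x | x p.1 < x p.2} := by
        ext x
        simp only [Set.mem_setOf_eq, Set.mem_iInter]
        exact ⟨fun h p hp => h hp, fun h a b hab => h (a, b) hab⟩
      rw [this]
      exact MeasurableSet.iInter fun p => MeasurableSet.iInter fun _ =>
        measurableSet_lt (measurable_pi_apply _) (measurable_pi_apply _)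
    exact h1.inter h2
  have hT_cont : Continuous T := LinearMap.continuous_on_pi T
  have hO_meas : MeasurableSet (Set.pi Set.univ fun _ : Fin (n + 1) => Ioi (0 : ℝ)) :=
    MeasurableSet.univ_pi fun _ => measurableSet_Ioi
  -- measure preservation
  have hmap : Measure.map T volume = volume := by
    rw [hTdef, Real.map_matrix_volume_pi_eq_smul_volume_pi (by rw [det_M]; norm_num)]
    simp [det_M]
  -- change of variables
  have hfm : AEStronglyMeasurable (S.indicator g) (Measure.map T volume) := by
    rw [hmap]
    exact (hg_cont.stronglyMeasurable.indicator hS_meas).aestronglyMeasurable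
  have step1 : (∫ x in S, g x) = ∫ y in (Set.pi Set.univ fun _ => Ioi (0 : ℝ)), g (T y) := by
    rw [← integral_indicator hS_meas]
    conv_lhs => rw [← hmap]
    rw [integral_map hT_cont.measurable.aemeasurable hfm]
    rw [show (fun y => S.indicator g (T y))
        = (Set.pi Set.univ fun _ => Ioi (0 : ℝ)).indicator (fun y => g (T y)) by
      funext y
      rw [← T_preimage n]
      by_cases hy : T y ∈ S
      · rw [Set.indicator_of_mem hy, Set.indicator_of_mem (Set.mem_preimage.mpr hy)]
      · rw [Set.indicator_of_notMem hy,
          Set.indicator_of_notMem (fun hc => hy (Set.mem_preimage.mp hc))]]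
    rw [integral_indicator hO_meas]
  -- the integrand after change of variables, as a sum of products
  set J : Finset (Fin (n + 1)) := Finset.univ.filter (fun j => (j : ℕ) < k) with hJdef
  set h : Fin (n + 1) → Fin (n + 1) → ℝ → ℝ :=
    fun j i => (Ioi (0 : ℝ)).indicator (fun t => (if i = j then t else 1) * Real.exp (-(c i * t)))
    with hhdef
  have key : ∀ y : Fin (n + 1) → ℝ,
      (Set.pi Set.univ fun _ => Ioi (0 : ℝ)).indicator (fun y => g (T y)) y
        = ∑ j ∈ J, ∏ i, h j i (y i) := by
    intro y
    by_cases hy : y ∈ Set.pi Set.univ fun _ : Fin (n + 1) => Ioi (0 : ℝ)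
    · rw [Set.indicator_of_mem hy]
      have hyi : ∀ i, y i ∈ Ioi (0 : ℝ) := fun i => hy i (Set.mem_univ i)
      have hprod : ∀ j, (∏ i, h j i (y i))
          = (∏ i, (if i = j then y i else 1)) * ∏ i, Real.exp (-(c i * y i)) := by
        intro j
        rw [← Finset.prod_mul_distrib]
        refine Finset.prod_congr rfl fun i _ => ?_
        simp only [hhdef]
        rw [Set.indicator_of_mem (hyi i)]
      have hgty : g (T y) = (∑ j ∈ J, y j) * ∏ i, Real.exp (-(c i * y i)) := by
        rw [hgdef]
        simp only
        congr 1
        · rw [hTdef, T_apply, hJdef, Finset.sum_filter]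
          refine Finset.sum_congr rfl fun j _ => ?_
          have hiff : j ≤ (⟨k - 1, by omega⟩ : Fin (n + 1)) ↔ (j : ℕ) < k := by
            rw [Fin.le_def]
            exact (by omega : (j : ℕ) ≤ k - 1 ↔ (j : ℕ) < k)
          simp only [hiff]
        · rw [hTdef, T_sum, ← Real.exp_sum]
          congr 1
          rw [← Finset.sum_neg_distrib]
      rw [hgty, Finset.sum_mul]
      refine Finset.sum_congr rfl fun j _ => ?_
      rw [hprod j, Finset.prod_ite_eq' Finset.univ j (fun i => y i)]
      simp
    · rw [Set.indicator_of_notMem hy]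
      simp only [Set.mem_pi, Set.mem_univ, true_implies, not_forall] at hy
      obtain ⟨i₀, hi₀⟩ := hy
      refine (Finset.sum_eq_zero fun j _ => ?_).symm
      refine Finset.prod_eq_zero (Finset.mem_univ i₀) ?_
      simp only [hhdef]
      rw [Set.indicator_of_notMem hi₀]
  -- integrability of the factors
  have h_int : ∀ j i, Integrable (h j i) volume := by
    intro j i
    refine IntegrableOn.integrable_indicator ?_ measurableSet_Ioi
    by_cases hij : i = j
    · simp only [hij, if_pos rfl]
      have := integrableOn_rpow_mul_exp_neg_mul_rpow (p := 1) (s := 1) (b := c j)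
        (by norm_num) (by norm_num) (hc_pos j)
      simpa [Real.rpow_one, neg_mul, hij] using this
    · simp only [if_neg hij, one_mul]
      have := exp_neg_integrableOn_Ioi (0 : ℝ) (hc_pos i)
      simpa [neg_mul] using this
  -- one-dimensional integrals
  have h_one : ∀ j i, (∫ t, h j i t) = (if i = j then (c i)⁻¹ else 1) * (c i)⁻¹ := by
    intro j i
    simp only [hhdef]
    rw [integral_indicator measurableSet_Ioi]
    by_cases hij : i = j
    · subst hij
      simp only [eq_self_iff_true, if_true]
      have := Real.integral_rpow_mul_exp_neg_mul_Ioi (a := 2) (r := c i) (by norm_num) (hc_pos i)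
      rw [show (2 : ℝ) - 1 = 1 from by norm_num] at this
      simp only [Real.rpow_one] at this
      rw [this, Real.Gamma_two, mul_one,
        show (2 : ℝ) = ((2 : ℕ) : ℝ) from by norm_num, Real.rpow_natCast]
      rw [one_div]
      ring
    · simp only [if_neg hij, one_mul]
      have := Real.integral_rpow_mul_exp_neg_mul_Ioi (a := 1) (r := c i) (by norm_num) (hc_pos i)
      rw [show (1 : ℝ) - 1 = 0 from by norm_num] at this
      simp only [Real.rpow_zero, one_mul, Real.rpow_one] at this
      rw [this, Real.Gamma_one, mul_one, one_div]
  -- put everything together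
  rw [step1]
  rw [← integral_indicator hO_meas]
  simp_rw [key]
  rw [integral_finset_sum (μ := volume) _ (fun j _ => Integrable.fintype_prod (fun i => h_int j i))]
  have hprod_int : ∀ j, (∫ y : Fin (n + 1) → ℝ, ∏ i, h j i (y i))
      = (c j)⁻¹ * ((n + 1).factorial : ℝ)⁻¹ := by
    intro j
    rw [volume_pi, integral_fintype_prod_eq_prod (f := fun i t => h j i t)]
    simp_rw [h_one]
    rw [Finset.prod_mul_distrib, Finset.prod_ite_eq' Finset.univ j (fun i => (c i)⁻¹)]
    simp only [Finset.mem_univ, if_true]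
    rw [Finset.prod_inv_distrib]
    rw [show (∏ i, c i) = ((n + 1).factorial : ℝ) from prod_c n]
  simp_rw [hprod_int]
  rw [← Finset.sum_mul]
  have hfilter : Finset.filter (fun m => m < k) (Finset.range (n + 1)) = Finset.range k := by
    ext m
    simp only [Finset.mem_filter, Finset.mem_range]
    omega
  have hsum : (∑ j ∈ J, (c j)⁻¹)
      = (harmonic (n + 1) : ℝ) - (harmonic (n + 1 - k) : ℝ) := by
    rw [hJdef, Finset.sum_filter]
    calc (∑ j : Fin (n + 1), if (j : ℕ) < k then (c j)⁻¹ else 0)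
        = ∑ j : Fin (n + 1),
            (fun m : ℕ => if m < k then (((n + 1 - m : ℕ) : ℝ))⁻¹ else 0) (j : ℕ) := by
          refine Finset.sum_congr rfl fun j _ => ?_
          simp only [hcdef]
      _ = ∑ m ∈ Finset.range (n + 1),
            (fun m : ℕ => if m < k then (((n + 1 - m : ℕ) : ℝ))⁻¹ else 0) m :=
          Fin.sum_univ_eq_sum_range (fun m : ℕ => if m < k then (((n + 1 - m : ℕ) : ℝ))⁻¹ else 0) (n + 1)
      _ = ∑ m ∈ Finset.range (n + 1), (if m < k then (((n + 1 - m : ℕ) : ℝ))⁻¹ else 0) := rfl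
      _ = ∑ m ∈ (Finset.range (n + 1)).filter (fun m => m < k), (((n + 1 - m : ℕ) : ℝ))⁻¹ :=
          (Finset.sum_filter _ _).symm
      _ = ∑ m ∈ Finset.range k, (((n + 1 - m : ℕ) : ℝ))⁻¹ := by rw [hfilter]
      _ = _ := harmonic_sum n k hk2
  rw [hsum, div_eq_mul_inv]
end
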